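/- (Attainment of the infimum in Theorem 3, equality of bounds (22) and (23).) Let c_* > 0, t > 0, K > 0 and v̄ ≥ K be real constants, define B(λ; c_*, v̄, K, 0) = (1/2) λ² v̄ + λ² K (f_2(λ c_*) − 1/2), and let λ_* be the unique positive solution of (K/c_*) e^{λ c_*} = −λ (v̄ − K) + t + K/c_*. Then inf_{λ > 0} { B(λ; c_*, v̄, K, 0) − λ t } = B(λ_*; c_*, v̄, K, 0) − λ_* t. -/

import Mathlib

open Real

/-- `f k u = ∑_{j=0}^∞ u^j / (j+k)!`. -/
noncomputable def fSeries (k : ℕ) (u : ℝ) : ℝ := ∑' j : ℕ, u ^ j / (Nat.factorial (j + k) : ℝ)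

lemma sq_mul_fSeries_two (u : ℝ) : u ^ 2 * fSeries 2 u = Real.exp u - 1 - u := by
  have hs : Summable (fun n : ℕ => u ^ n / (n.factorial : ℝ)) := Real.summable_pow_div_factorial u
  have hexp : Real.exp u = ∑' n : ℕ, u ^ n / n.factorial := by
    rw [Real.exp_eq_exp_ℝ, NormedSpace.exp_eq_tsum_div]
  have hs1 : Summable (fun n : ℕ => u ^ (n + 1) / ((n + 1).factorial : ℝ)) :=
    (summable_nat_add_iff 1).2 hs
  have h1 : (∑' n : ℕ, u ^ n / (n.factorial : ℝ)) =
      1 + (u + ∑' n : ℕ, u ^ (n + 1 + 1) / ((n + 1 + 1).factorial : ℝ)) := by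
    rw [hs.tsum_eq_zero_add, hs1.tsum_eq_zero_add]
    norm_num
  have h2 : u ^ 2 * fSeries 2 u = ∑' n : ℕ, u ^ (n + 1 + 1) / ((n + 1 + 1).factorial : ℝ) := by
    rw [fSeries, ← tsum_mul_left]
    refine tsum_congr fun n => ?_
    have : n + 1 + 1 = n + 2 := by ring
    rw [this]
    field_simp
    ring
  rw [h2, hexp, h1]
  ring

theorem inf_attained_at_lambda_star
    (cstar t K v : ℝ) (hc : 0 < cstar) (ht : 0 < t) (hK : 0 < K) (hvK : K ≤ v)
    (lstar : ℝ) (hlstar : 0 < lstar)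
    (heq : (K / cstar) * Real.exp (lstar * cstar) = -lstar * (v - K) + t + K / cstar) :
    sInf {y : ℝ | ∃ l : ℝ, 0 < l ∧
        y = ((1 / 2) * l ^ 2 * v + l ^ 2 * K * (fSeries 2 (l * cstar) - 1 / 2)) - l * t} =
      ((1 / 2) * lstar ^ 2 * v + lstar ^ 2 * K * (fSeries 2 (lstar * cstar) - 1 / 2))
        - lstar * t := by
  set S := {y : ℝ | ∃ l : ℝ, 0 < l ∧
      y = ((1 / 2) * l ^ 2 * v + l ^ 2 * K * (fSeries 2 (l * cstar) - 1 / 2)) - l * t}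
  set m := ((1 / 2) * lstar ^ 2 * v + lstar ^ 2 * K * (fSeries 2 (lstar * cstar) - 1 / 2))
      - lstar * t with hm
  -- rewrite B via exp
  have hB : ∀ l : ℝ,
      ((1 / 2) * l ^ 2 * v + l ^ 2 * K * (fSeries 2 (l * cstar) - 1 / 2)) - l * t
      = (1 / 2) * l ^ 2 * (v - K) + (K / cstar ^ 2) *
          (Real.exp (l * cstar) - 1 - l * cstar) - l * t := by
    intro l
    have h := sq_mul_fSeries_two (l * cstar)
    have hc2 : (cstar : ℝ) ^ 2 ≠ 0 := by positivity
    have : l ^ 2 * fSeries 2 (l * cstar) =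
        (Real.exp (l * cstar) - 1 - l * cstar) / cstar ^ 2 := by
      field_simp
      nlinarith [h]
    linear_combination K * this
  have hmem : m ∈ S := ⟨lstar, hlstar, rfl⟩
  have hlb : ∀ y ∈ S, m ≤ y := by
    rintro y ⟨l, hl, rfl⟩
    rw [hm, hB, hB, ← sub_nonneg]
    have hexp : Real.exp (lstar * cstar) * (1 + (l * cstar - lstar * cstar)) ≤
        Real.exp (l * cstar) := by
      have h1 : (l * cstar - lstar * cstar) + 1 ≤ Real.exp (l * cstar - lstar * cstar) :=
        Real.add_one_le_exp _
      have h2 : Real.exp (lstar * cstar) * Real.exp (l * cstar - lstar * cstar) =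
          Real.exp (l * cstar) := by rw [← Real.exp_add]; ring_nf
      nlinarith [Real.exp_pos (lstar * cstar)]
    have hE : 0 < Real.exp (lstar * cstar) := Real.exp_pos _
    have hvK' : (0:ℝ) ≤ v - K := by linarith
    have hc2 : (0:ℝ) < cstar ^ 2 := by positivity
    field_simp at heq
    have key := mul_le_mul_of_nonneg_left hexp hK.le
    have h3 : (l - lstar)*cstar*(K*Real.exp (lstar*cstar) - K) ≤
        K*(Real.exp (l*cstar) - Real.exp (lstar*cstar) - (l - lstar)*cstar) := by
      nlinarith [key]
    have h4 : (l - lstar)*cstar*(K*Real.exp (lstar*cstar) - K) =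
        (l - lstar)*(t - lstar*(v-K))*cstar^2 := by
      rw [mul_comm cstar lstar] at heq
      linear_combination (l - lstar)*cstar*heq
    have hpoly : 0 ≤ (1/2)*(l^2 - lstar^2)*(v-K)*cstar^2
        + K*(Real.exp (l*cstar) - Real.exp (lstar*cstar) - (l - lstar)*cstar)
        - (l - lstar)*t*cstar^2 := by
      nlinarith [h3, h4, mul_nonneg hc2.le (mul_nonneg (sq_nonneg (l - lstar)) hvK')]
    have hgoal : (1 / 2 * l ^ 2 * (v - K) + K / cstar ^ 2 * (Real.exp (l * cstar) - 1 - l * cstar) - l * t)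
        - (1 / 2 * lstar ^ 2 * (v - K) + K / cstar ^ 2 * (Real.exp (lstar * cstar) - 1 - lstar * cstar) - lstar * t)
        = ((1/2)*(l^2 - lstar^2)*(v-K)*cstar^2
        + K*(Real.exp (l*cstar) - Real.exp (lstar*cstar) - (l - lstar)*cstar)
        - (l - lstar)*t*cstar^2) / cstar ^ 2 := by
      field_simp
      ring
    rw [hgoal]
    positivity
  exact le_antisymm (csInf_le ⟨m, hlb⟩ hmem) (le_csInf ⟨m, hmem⟩ hlb)
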